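/- Let z ∈ ℝ^M with z ≥ 0, A ∈ ℂ^{M×K}, and for a fixed point x⁽ˡ⁾ define z⁽ˡ⁾ = z ⊙ e^{j arg(Ax⁽ˡ⁾)} (componentwise). Then the function f̄(x) = (1/2)‖z⁽ˡ⁾ − Ax‖₂² is an upper bound of f(x) = (1/2)‖z − |Ax|‖₂² for all x ∈ ℂ^K, and f̄(x⁽ˡ⁾) = f(x⁽ˡ⁾). -/

import Mathlib

open Finset

lemma ptwise_le (z : ℝ) (hz : 0 ≤ z) (θ : ℝ) (w : ℂ) :
    (z - ‖w‖) ^ 2 ≤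
      ‖(z : ℂ) * Complex.exp (θ * Complex.I) - w‖ ^ 2 := by
  have h1 : ‖(z : ℂ) * Complex.exp (θ * Complex.I) - w‖ ^ 2 =
      Complex.normSq ((z : ℂ) * Complex.exp (θ * Complex.I) - w) := Complex.sq_norm _
  rw [h1, Complex.normSq_sub]
  have habs : Complex.normSq ((z : ℂ) * Complex.exp (θ * Complex.I)) = z ^ 2 := by
    rw [Complex.normSq_eq_norm_sq, norm_mul, Complex.norm_exp_ofReal_mul_I, mul_one,
      Complex.norm_real, Real.norm_eq_abs, sq_abs]
  have hre : (((z : ℂ) * Complex.exp (θ * Complex.I)) * starRingEnd ℂ w).re ≤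
      z * ‖w‖ := by
    calc (((z : ℂ) * Complex.exp (θ * Complex.I)) * starRingEnd ℂ w).re
        ≤ ‖((z : ℂ) * Complex.exp (θ * Complex.I)) * starRingEnd ℂ w‖ :=
          Complex.re_le_norm _
      _ = z * ‖w‖ := by
          rw [norm_mul, norm_mul, Complex.norm_exp_ofReal_mul_I, Complex.norm_conj,
            Complex.norm_real, Real.norm_eq_abs, abs_of_nonneg hz, mul_one]
  have hns : Complex.normSq w = ‖w‖ ^ 2 := (Complex.sq_norm w).symm
  nlinarith [norm_nonneg w]

lemma ptwise_eq (z : ℝ) (w : ℂ) :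
    (z - ‖w‖) ^ 2 =
      ‖(z : ℂ) * Complex.exp (w.arg * Complex.I) - w‖ ^ 2 := by
  have hw : (‖w‖ : ℂ) * Complex.exp (w.arg * Complex.I) = w :=
    Complex.norm_mul_exp_arg_mul_I w
  have : (z : ℂ) * Complex.exp (w.arg * Complex.I) - w =
      ((z : ℝ) - ‖w‖) * Complex.exp (w.arg * Complex.I) := by
    rw [sub_mul, hw]
  rw [this, norm_mul, Complex.norm_exp_ofReal_mul_I, mul_one, ← Complex.ofReal_sub,
    Complex.norm_real, Real.norm_eq_abs, sq_abs]

theorem smooth_majorization_phase_retrieval {M K : ℕ}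
    (z : Fin M → ℝ) (hz : ∀ i, 0 ≤ z i)
    (A : Matrix (Fin M) (Fin K) ℂ) (xl : Fin K → ℂ) :
    let zl : Fin M → ℂ :=
      fun i => (z i : ℂ) * Complex.exp ((A.mulVec xl i).arg * Complex.I)
    (∀ x : Fin K → ℂ,
      (1 / 2) * ∑ i, (z i - ‖A.mulVec x i‖) ^ 2 ≤
        (1 / 2) * ∑ i, ‖zl i - A.mulVec x i‖ ^ 2) ∧
    (1 / 2) * ∑ i, (z i - ‖A.mulVec xl i‖) ^ 2 =
      (1 / 2) * ∑ i, ‖zl i - A.mulVec xl i‖ ^ 2 := by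
  intro zl
  constructor
  · intro x
    have := Finset.sum_le_sum (fun i (_ : i ∈ Finset.univ) => ptwise_le (z i) (hz i)
      (A.mulVec xl i).arg (A.mulVec x i))
    linarith
  · congr 1
    exact Finset.sum_congr rfl fun i _ => ptwise_eq (z i) _
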